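/- Let p be an odd prime, n a positive integer, and y ∈ ℤ/p^nℤ. Then the number of pairs (b,c) ∈ (ℤ/p^nℤ)² with 4bc = y equals (m+1)·φ(p^n) if y is the reduction of p^m·y' for integers m ≥ 0 and y' with p ∤ y' and m < n, and equals n·φ(p^n) + p^n if y = 0. -/

import Mathlib

open Finset

lemma count_multiples {d N : ℕ} (hd : d ∣ N) (h0 : 0 < d) :
    ((range N).filter (fun v => d ∣ v)).card = N / d := by
  rw [← Finset.card_range (N / d)]
  apply Finset.card_nbij' (fun v => v / d) (fun j => d * j)
  · intro v hv
    simp only [Finset.mem_coe, mem_filter, mem_range] at hv ⊢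
    exact Nat.div_lt_div_of_lt_of_dvd hd hv.1
  · intro j hj
    simp only [Finset.mem_coe, mem_filter, mem_range] at hj ⊢
    exact ⟨(Nat.lt_div_iff_mul_lt' hd j).mp hj, Dvd.intro j rfl⟩
  · intro v hv
    simp only [Finset.mem_coe, mem_filter, mem_range] at hv
    exact Nat.mul_div_cancel' hv.2
  · intro j _
    exact Nat.mul_div_cancel_left j h0

lemma sum_ite_dvd {d N A : ℕ} (hd : d ∣ N) (h0 : 0 < d) :
    (∑ v ∈ range N, if d ∣ v then A else 0) = A * (N / d) := by
  rw [← Finset.sum_filter, Finset.sum_const, count_multiples hd h0, smul_eq_mul, mul_comm]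

lemma sum_zmod_eq_sum_range {M : ℕ} [NeZero M] (F : ℕ → ℕ) :
    ∑ c : ZMod M, F (ZMod.val c) = ∑ v ∈ range M, F v := by
  apply Finset.sum_nbij' (fun c => ZMod.val c) (fun v => (v : ZMod M))
  · intro c _; exact mem_range.mpr (ZMod.val_lt c)
  · intro v _; exact mem_univ _
  · intro c _; rw [ZMod.natCast_val, ZMod.cast_id]
  · intro v hv; exact ZMod.val_natCast_of_lt (mem_range.mp hv)
  · intro c _; rfl

lemma card_filter_dvd_val {M d : ℕ} [NeZero M] (hd : d ∣ M) (h0 : 0 < d) :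
    (Finset.univ.filter (fun c : ZMod M => d ∣ c.val)).card = M / d := by
  have : (Finset.univ.filter (fun c : ZMod M => d ∣ c.val)).card
      = ∑ c : ZMod M, if d ∣ c.val then 1 else 0 := by
    rw [← Finset.sum_filter]; simp
  rw [this, sum_zmod_eq_sum_range (fun v => if d ∣ v then 1 else 0), sum_ite_dvd hd h0, one_mul]

lemma fiber_card {M : ℕ} [NeZero M] (b z : ZMod M) :
    (Finset.univ.filter (fun c : ZMod M => b * c = z)).card
      = if Nat.gcd b.val M ∣ z.val then Nat.gcd b.val M else 0 := by
  have hM : 0 < M := Nat.pos_of_ne_zero (NeZero.ne M)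
  set g := Nat.gcd b.val M with hg
  have hg0 : 0 < g := Nat.gcd_pos_of_pos_right _ hM
  have hgM : g ∣ M := Nat.gcd_dvd_right _ _
  have hgb : g ∣ b.val := Nat.gcd_dvd_left _ _
  have hMg : M / g ∣ M := Nat.div_dvd_of_dvd hgM
  have hMg0 : 0 < M / g := Nat.div_pos (Nat.le_of_dvd hM hgM) hg0
  -- kernel characterization
  have hker : ∀ c : ZMod M, b * c = 0 ↔ (M / g) ∣ c.val := by
    intro c
    have hb : b * c = ((b.val * c.val : ℕ) : ZMod M) := by
      push_cast [ZMod.natCast_val, ZMod.cast_id]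
      rfl
    rw [hb, ZMod.natCast_eq_zero_iff]
    constructor
    · intro h
      have h1 : g * (M / g) ∣ g * ((b.val / g) * c.val) := by
        rw [Nat.mul_div_cancel' hgM, ← mul_assoc, Nat.mul_div_cancel' hgb]
        exact h
      have h2 : M / g ∣ (b.val / g) * c.val := (mul_dvd_mul_iff_left hg0.ne').mp h1
      exact (Nat.coprime_div_gcd_div_gcd hg0).symm.dvd_of_dvd_mul_left h2
    · intro h
      calc M = g * (M / g) := (Nat.mul_div_cancel' hgM).symm
        _ ∣ b.val * c.val := mul_dvd_mul hgb h
  by_cases hz : g ∣ z.val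
  · rw [if_pos hz]
    -- find a particular solution c0
    obtain ⟨t, ht⟩ := hz
    set x := Nat.gcdA b.val M with hx
    have hbez : (g : ℤ) = b.val * x + M * Nat.gcdB b.val M := Nat.gcd_eq_gcd_ab _ _
    set c0 : ZMod M := ((x * t : ℤ) : ZMod M) with hc0
    have hsol : b * c0 = z := by
      have hb : b = ((b.val : ℤ) : ZMod M) := by push_cast [ZMod.natCast_val, ZMod.cast_id]; rfl
      have hzz : z = ((z.val : ℤ) : ZMod M) := by push_cast [ZMod.natCast_val, ZMod.cast_id]; rfl
      rw [hb, hc0, hzz, ← Int.cast_mul]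
      have key : ((b.val : ℤ) * (x * t)) = (z.val : ℤ) + M * (-(Nat.gcdB b.val M * t)) := by
        have htz : (z.val : ℤ) = (g : ℤ) * t := by exact_mod_cast congrArg (Nat.cast : ℕ → ℤ) ht
        rw [htz, hbez]; ring
      rw [key]
      push_cast [ZMod.natCast_self]
      ring
    -- bijection between fiber and kernel
    have hcard : (Finset.univ.filter (fun c : ZMod M => b * c = z)).card
        = (Finset.univ.filter (fun c : ZMod M => b * c = 0)).card := by
      apply Finset.card_nbij' (fun c => c - c0) (fun c => c + c0)
      · intro c hc
        simp only [Finset.mem_coe, Finset.mem_filter, Finset.mem_univ, true_and] at hc ⊢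
        rw [mul_sub, hc, hsol, sub_self]
      · intro c hc
        simp only [Finset.mem_coe, Finset.mem_filter, Finset.mem_univ, true_and] at hc ⊢
        rw [mul_add, hc, hsol, zero_add]
      · intro c _; simp
      · intro c _; simp
    rw [hcard]
    have : (Finset.univ.filter (fun c : ZMod M => b * c = 0))
        = (Finset.univ.filter (fun c : ZMod M => (M / g) ∣ c.val)) := by
      apply Finset.filter_congr; intro c _; simpa using hker c
    rw [this, card_filter_dvd_val hMg hMg0, Nat.div_div_self hgM (NeZero.ne M)]
  · rw [if_neg hz]
    rw [Finset.card_eq_zero, Finset.filter_eq_empty_iff]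
    intro c _ hc
    apply hz
    have : z.val = b.val * c.val % M := by rw [← hc, ZMod.val_mul]
    rw [this, Nat.dvd_mod_iff hgM]
    exact Dvd.dvd.mul_right hgb _

section PrimePow
variable {p : ℕ} (hp : p.Prime)
include hp

lemma gcd_pow_succ (m v : ℕ) :
    Nat.gcd v (p ^ (m + 1))
      = Nat.gcd v (p ^ m) + (if p ^ (m + 1) ∣ v then p ^ (m + 1) - p ^ m else 0) := by
  by_cases h : p ^ (m + 1) ∣ v
  · rw [if_pos h, Nat.gcd_eq_right h,
      Nat.gcd_eq_right (dvd_trans (pow_dvd_pow p (Nat.le_succ m)) h)]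
    have : p ^ m ≤ p ^ (m + 1) := Nat.pow_le_pow_right hp.pos (Nat.le_succ m)
    omega
  · rw [if_neg h, add_zero]
    apply Nat.dvd_antisymm
    · obtain ⟨j, hj, hd⟩ := (Nat.dvd_prime_pow hp).mp (Nat.gcd_dvd_right v (p ^ (m + 1)))
      have hjm : j ≤ m := by
        by_contra hc
        have : j = m + 1 := by omega
        exact h (this ▸ hd ▸ Nat.gcd_dvd_left v (p ^ (m + 1)))
      exact Nat.dvd_gcd (Nat.gcd_dvd_left _ _) (hd ▸ pow_dvd_pow p hjm)
    · exact Nat.dvd_gcd (Nat.gcd_dvd_left _ _)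
        (dvd_trans (Nat.gcd_dvd_right v (p ^ m)) (pow_dvd_pow p (Nat.le_succ m)))

lemma sum_gcd_pow {n : ℕ} : ∀ m ≤ n,
    (∑ v ∈ range (p ^ n), Nat.gcd v (p ^ m)) = p ^ n + m * (p ^ n - p ^ (n - 1)) := by
  intro m
  induction m with
  | zero => intro _; simp
  | succ m ih =>
    intro hmn
    have hmn' : m ≤ n := by omega
    have hdvd : p ^ (m + 1) ∣ p ^ n := pow_dvd_pow p hmn
    have hpos : 0 < p ^ (m + 1) := Nat.pow_pos hp.pos
    calc (∑ v ∈ range (p ^ n), Nat.gcd v (p ^ (m + 1)))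
        = ∑ v ∈ range (p ^ n),
            (Nat.gcd v (p ^ m) + (if p ^ (m + 1) ∣ v then p ^ (m + 1) - p ^ m else 0)) := by
          exact Finset.sum_congr rfl fun v _ => gcd_pow_succ hp m v
      _ = (∑ v ∈ range (p ^ n), Nat.gcd v (p ^ m))
            + (p ^ (m + 1) - p ^ m) * (p ^ n / p ^ (m + 1)) := by
          rw [Finset.sum_add_distrib, sum_ite_dvd hdvd hpos]
      _ = p ^ n + (m + 1) * (p ^ n - p ^ (n - 1)) := by
          rw [ih hmn', Nat.pow_div hmn hp.pos, Nat.sub_mul, ← pow_add, ← pow_add]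
          have h1 : m + 1 + (n - (m + 1)) = n := by omega
          have h2 : m + (n - (m + 1)) = n - 1 := by omega
          rw [h1, h2]
          ring

end PrimePow

lemma card_pairs_eq_sum {M : ℕ} [NeZero M] (P : ZMod M → ZMod M → Prop)
    [∀ b c, Decidable (P b c)] :
    (Finset.univ.filter (fun bc : ZMod M × ZMod M => P bc.1 bc.2)).card
      = ∑ b : ZMod M, (Finset.univ.filter (fun c => P b c)).card := by
  rw [Finset.card_eq_sum_card_fiberwise
    (f := Prod.fst) (t := Finset.univ) (fun x _ => Finset.mem_univ _)]
  apply Finset.sum_congr rfl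
  intro b _
  apply Finset.card_nbij' (fun bc => bc.2) (fun c => (b, c))
  · intro bc h
    simp only [Finset.mem_coe, Finset.mem_filter, Finset.mem_univ, true_and] at h ⊢
    rw [← h.2]; exact h.1
  · intro c hc
    simp only [Finset.mem_coe, Finset.mem_filter, Finset.mem_univ, true_and] at hc ⊢
    exact ⟨hc, trivial⟩
  · intro bc h
    simp only [Finset.mem_coe, Finset.mem_filter, Finset.mem_univ, true_and] at h
    exact Prod.ext h.2.symm rfl
  · intro c _; rfl

lemma card_unit_mul {M : ℕ} [NeZero M] (u : (ZMod M)ˣ) (z : ZMod M) :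
    (Finset.univ.filter (fun bc : ZMod M × ZMod M => (u : ZMod M) * bc.1 * bc.2 = z)).card
      = (Finset.univ.filter (fun bc : ZMod M × ZMod M => bc.1 * bc.2 = z)).card := by
  apply Finset.card_nbij' (fun bc => ((u : ZMod M) * bc.1, bc.2))
    (fun bc => (((u⁻¹ : (ZMod M)ˣ) : ZMod M) * bc.1, bc.2))
  · intro bc h
    simpa using h
  · intro bc h
    simp only [Finset.mem_coe, Finset.mem_filter, Finset.mem_univ, true_and] at h ⊢
    simp only [← mul_assoc, Units.mul_inv, one_mul]
    exact h
  · intro bc _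
    simp [← mul_assoc]
  · intro bc _
    simp [← mul_assoc]

lemma count_mul_eq {M : ℕ} [NeZero M] (z : ZMod M) :
    (Finset.univ.filter (fun bc : ZMod M × ZMod M => bc.1 * bc.2 = z)).card
      = ∑ v ∈ range M, (if Nat.gcd v M ∣ z.val then Nat.gcd v M else 0) := by
  rw [card_pairs_eq_sum (fun b c => b * c = z)]
  rw [← sum_zmod_eq_sum_range (fun v => if Nat.gcd v M ∣ z.val then Nat.gcd v M else 0)]
  exact Finset.sum_congr rfl fun b _ => fiber_card b z

lemma totient_eq_sub {p n : ℕ} (hp : p.Prime) (hn : 0 < n) :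
    Nat.totient (p ^ n) = p ^ n - p ^ (n - 1) := by
  obtain ⟨k, rfl⟩ : ∃ k, n = k + 1 := ⟨n - 1, by omega⟩
  rw [Nat.totient_prime_pow hp (Nat.succ_pos k)]
  simp only [Nat.add_sub_cancel]
  rw [Nat.mul_sub, pow_succ, mul_one]
  simp

lemma eval_case1 {p n m : ℕ} (hp : p.Prime) (hm : m < n) {w : ℕ}
    (hA : p ^ m ∣ w) (hB : ¬ p ^ (m + 1) ∣ w) :
    (∑ v ∈ range (p ^ n), if Nat.gcd v (p ^ n) ∣ w then Nat.gcd v (p ^ n) else 0)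
      = (m + 1) * Nat.totient (p ^ n) := by
  have hm1 : m + 1 ≤ n := hm
  have hkey : ∀ v : ℕ,
      ((if Nat.gcd v (p ^ n) ∣ w then Nat.gcd v (p ^ n) else 0)
        + (if p ^ (m + 1) ∣ v then p ^ m else 0)) = Nat.gcd v (p ^ m) := by
    intro v
    by_cases h : p ^ (m + 1) ∣ v
    · have hgd : p ^ (m + 1) ∣ Nat.gcd v (p ^ n) := Nat.dvd_gcd h (pow_dvd_pow p hm1)
      have hcond : ¬ Nat.gcd v (p ^ n) ∣ w := fun hc => hB (dvd_trans hgd hc)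
      rw [if_pos h, if_neg hcond, zero_add,
        Nat.gcd_eq_right (dvd_trans (pow_dvd_pow p (Nat.le_succ m)) h)]
    · obtain ⟨j, hj, hd⟩ := (Nat.dvd_prime_pow hp).mp (Nat.gcd_dvd_right v (p ^ n))
      have hjm : j ≤ m := by
        by_contra hc
        exact h (dvd_trans (hd ▸ pow_dvd_pow p (by omega : m + 1 ≤ j))
          (Nat.gcd_dvd_left v (p ^ n)))
      have hcond : Nat.gcd v (p ^ n) ∣ w :=
        dvd_trans (hd ▸ pow_dvd_pow p hjm) hA
      have heq : Nat.gcd v (p ^ n) = Nat.gcd v (p ^ m) := by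
        apply Nat.dvd_antisymm
        · exact Nat.dvd_gcd (Nat.gcd_dvd_left _ _) (hd ▸ pow_dvd_pow p hjm)
        · exact Nat.dvd_gcd (Nat.gcd_dvd_left _ _)
            (dvd_trans (Nat.gcd_dvd_right v (p ^ m)) (pow_dvd_pow p (by omega)))
      rw [if_pos hcond, if_neg h, add_zero, heq]
  have hsum : (∑ v ∈ range (p ^ n), if Nat.gcd v (p ^ n) ∣ w then Nat.gcd v (p ^ n) else 0)
      + (∑ v ∈ range (p ^ n), if p ^ (m + 1) ∣ v then p ^ m else 0)
      = p ^ n + m * (p ^ n - p ^ (n - 1)) := by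
    rw [← Finset.sum_add_distrib]
    rw [Finset.sum_congr rfl fun v _ => hkey v]
    exact sum_gcd_pow hp m (by omega)
  have hind : (∑ v ∈ range (p ^ n), if p ^ (m + 1) ∣ v then p ^ m else 0) = p ^ (n - 1) := by
    rw [sum_ite_dvd (pow_dvd_pow p hm1) (Nat.pow_pos hp.pos),
      Nat.pow_div hm1 hp.pos, ← pow_add]
    congr 1
    omega
  rw [hind] at hsum
  rw [totient_eq_sub hp (by omega)]
  have hle : p ^ (n - 1) ≤ p ^ n := Nat.pow_le_pow_right hp.pos (by omega)
  have hpn : p ^ (n - 1) * p = p ^ n := by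
    rw [← pow_succ]
    congr 1
    omega
  rw [add_mul, one_mul]
  set X := p ^ n - p ^ (n - 1)
  have hXp : X + p ^ (n - 1) = p ^ n := by omega
  omega

lemma eval_case0 {p n : ℕ} (hp : p.Prime) (hn : 0 < n) :
    (∑ v ∈ range (p ^ n), Nat.gcd v (p ^ n)) = n * Nat.totient (p ^ n) + p ^ n := by
  rw [sum_gcd_pow hp n le_rfl, totient_eq_sub hp hn]
  omega

/-- **Sublemma (solutions of `4bc = y` mod `p^n`).**
For an odd prime `p`, `n ≥ 1` and `y ∈ ℤ/p^nℤ`, the number of pairs `(b,c)` with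
`4bc = y` equals `(m+1)·φ(p^n)` if `y` is the reduction of `p^m·y'` with `p ∤ y'`
and `m < n`, and equals `n·φ(p^n) + p^n` if `y = 0`. -/
theorem card_four_mul_eq_zmod_prime_pow (p : ℕ) [Fact p.Prime] (hp : p ≠ 2)
    (n : ℕ) (hn : 0 < n) (y : ZMod (p ^ n)) :
    (∀ m : ℕ, ∀ y' : ℤ, ¬ (p : ℤ) ∣ y' → m < n →
        y = ((p : ℤ) ^ m * y' : ℤ) →
        Nat.card {bc : ZMod (p ^ n) × ZMod (p ^ n) | 4 * bc.1 * bc.2 = y}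
          = (m + 1) * Nat.totient (p ^ n))
    ∧ (y = 0 →
        Nat.card {bc : ZMod (p ^ n) × ZMod (p ^ n) | 4 * bc.1 * bc.2 = y}
          = n * Nat.totient (p ^ n) + p ^ n) := by
  have hp' : p.Prime := Fact.out
  haveI : NeZero (p ^ n) := ⟨pow_ne_zero n hp'.pos.ne'⟩
  have hcop : Nat.Coprime 4 (p ^ n) := by
    apply Nat.Coprime.pow_right
    have h2 : Nat.Coprime 2 p := (Nat.coprime_primes Nat.prime_two hp').mpr (Ne.symm hp)
    have : (4 : ℕ) = 2 ^ 2 := by norm_num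
    rw [this]
    exact Nat.Coprime.pow_left 2 h2
  set u : (ZMod (p ^ n))ˣ := ZMod.unitOfCoprime 4 hcop with hu_def
  have hu : (u : ZMod (p ^ n)) = 4 := by
    rw [hu_def, ZMod.coe_unitOfCoprime]
    norm_num
  have hNcard : Nat.card {bc : ZMod (p ^ n) × ZMod (p ^ n) | 4 * bc.1 * bc.2 = y}
      = ∑ v ∈ range (p ^ n), (if Nat.gcd v (p ^ n) ∣ y.val then Nat.gcd v (p ^ n) else 0) := by
    have h1 : Nat.card {bc : ZMod (p ^ n) × ZMod (p ^ n) | 4 * bc.1 * bc.2 = y}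
        = (Finset.univ.filter
            (fun bc : ZMod (p ^ n) × ZMod (p ^ n) => 4 * bc.1 * bc.2 = y)).card := by
      rw [Nat.card_coe_set_eq, Set.ncard_eq_toFinset_card', Set.toFinset_setOf]
    rw [h1, ← hu, card_unit_mul u y, count_mul_eq]
  constructor
  · intro m y' hy' hm hy
    -- divisibility facts about y.val
    have hdiff : ((p : ℤ) ^ n) ∣ ((y.val : ℤ) - (p : ℤ) ^ m * y') := by
      have : (((y.val : ℤ) - (p : ℤ) ^ m * y' : ℤ) : ZMod (p ^ n)) = 0 := by
        push_cast [ZMod.natCast_val, ZMod.cast_id, hy]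
        ring
      have h2 := (ZMod.intCast_zmod_eq_zero_iff_dvd _ _).mp this
      rwa [Nat.cast_pow] at h2
    have hA : p ^ m ∣ y.val := by
      have : ((p : ℤ) ^ m) ∣ (y.val : ℤ) := by
        have h1 : ((p : ℤ) ^ m) ∣ ((y.val : ℤ) - (p : ℤ) ^ m * y') :=
          dvd_trans (pow_dvd_pow _ (le_of_lt hm)) hdiff
        have h2 : ((p : ℤ) ^ m) ∣ (p : ℤ) ^ m * y' := dvd_mul_right _ _
        have := dvd_add h1 h2
        simpa using this
      exact_mod_cast (by push_cast at this ⊢; exact this : ((p ^ m : ℕ) : ℤ) ∣ (y.val : ℤ))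
    have hB : ¬ p ^ (m + 1) ∣ y.val := by
      intro hc
      have h1 : ((p : ℤ) ^ (m + 1)) ∣ (y.val : ℤ) := by exact_mod_cast hc
      have h2 : ((p : ℤ) ^ (m + 1)) ∣ ((y.val : ℤ) - (p : ℤ) ^ m * y') :=
        dvd_trans (pow_dvd_pow _ hm) hdiff
      have h3 : ((p : ℤ) ^ (m + 1)) ∣ (p : ℤ) ^ m * y' := by
        have := dvd_sub h1 h2
        simpa using this
      rw [pow_succ] at h3
      have h4 : (p : ℤ) ∣ y' := by
        have hne : ((p : ℤ) ^ m) ≠ 0 := pow_ne_zero m (by exact_mod_cast hp'.pos.ne')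
        exact (mul_dvd_mul_iff_left hne).mp h3
      exact hy' h4
    rw [hNcard]
    exact eval_case1 hp' hm hA hB
  · intro h0
    rw [hNcard, h0]
    simp only [ZMod.val_zero, dvd_zero, if_true]
    exact eval_case0 hp' hn
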